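/- arXiv:2008.13260 — 2 statements merged into one kernel-verified Lean document; each statement's English description precedes it below -/
import Mathlib

section
/- Let n ≥ 2, q ≥ 2, and suppose there exists an extended 1-perfect code in the Hamming graph H(n,q). Then n is even. -/
/-- The Hamming graph `H(n,q)`: vertices are `Fin n → ZMod q`, two vertices are
adjacent iff their Hamming distance is `1`. -/
def hammingGraph (n q : ℕ) : SimpleGraph (Fin n → ZMod q) where
  Adj x y := hammingDist x y = 1
  symm := ⟨by intro x y h; rwa [hammingDist_comm]⟩
  loopless := ⟨by intro x h; simp [hammingDist_self] at h⟩

/-- The distance from a vertex `x` to a code `C` in a graph `G`. -/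
noncomputable def distToCode {V : Type*} (G : SimpleGraph V) (C : Set V) (x : V) : ℕ :=
  sInf {d : ℕ | ∃ c ∈ C, G.dist x c = d}

/-- The code distance of a code `C` in a graph `G`: the minimum distance between
two distinct codewords. -/
noncomputable def codeDist {V : Type*} (G : SimpleGraph V) (C : Set V) : ℕ :=
  sInf {d : ℕ | ∃ x ∈ C, ∃ y ∈ C, x ≠ y ∧ G.dist x y = d}

/-- A code `C` is `1`-perfect if every vertex is at distance at most `1`
from exactly one codeword. -/
def IsOnePerfect {V : Type*} (G : SimpleGraph V) (C : Set V) : Prop :=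
  ∀ x, ∃! c, c ∈ C ∧ G.dist x c ≤ 1

/-- Deleting the `i`-th coordinate of a tuple. -/
def deleteCoord {α : Type*} {n : ℕ} (i : Fin n) (c : Fin n → α) (j : Fin (n - 1)) : α :=
  c (Fin.cast (show n - 1 + 1 = n by have := i.pos; omega)
      ((Fin.cast (show n = n - 1 + 1 by have := i.pos; omega) i).succAbove j))

/-- The projection (puncturing) of a code in `H(n,q)` at coordinate `i`. -/
def hammingProj {n q : ℕ} (i : Fin n) (C : Set (Fin n → ZMod q)) :
    Set (Fin (n - 1) → ZMod q) :=
  (deleteCoord i) '' C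

/-- A code `C` in `H(n,q)` is extended `1`-perfect if it is nonempty, its code distance
is `4`, and its projection at some coordinate is a `1`-perfect code in `H(n-1,q)`. -/
def IsExtOnePerfectH (n q : ℕ) (C : Set (Fin n → ZMod q)) : Prop :=
  C.Nonempty ∧ codeDist (hammingGraph n q) C = 4 ∧
    ∃ i : Fin n, IsOnePerfect (hammingGraph (n - 1) q) (hammingProj i C)

/-- A perfect coloring of `G` in `k` colors with quotient matrix `S`: a surjective map
`f` onto the colors such that every vertex of color `i` has exactly `S i j` neighbours
of color `j`. -/
def IsPerfectColoring {V : Type*} (G : SimpleGraph V) {k : ℕ} (f : V → Fin k)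
    (S : Matrix (Fin k) (Fin k) ℤ) : Prop :=
  Function.Surjective f ∧
    ∀ v j, (({u | G.Adj v u ∧ f u = j} : Set V).ncard : ℤ) = S (f v) j

/-- A code `C` in `G` is completely regular with quotient matrix `S` if the distance
coloring `x ↦ d(x, C)` is a perfect coloring with quotient matrix `S`. -/
def IsCompletelyRegular {V : Type*} (G : SimpleGraph V) (C : Set V) {k : ℕ}
    (S : Matrix (Fin k) (Fin k) ℤ) : Prop :=
  ∃ h : ∀ x, distToCode G C x < k,
    IsPerfectColoring G (fun x => (⟨distToCode G C x, h x⟩ : Fin k)) S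

/-- The connecting set of the Shrikhande graph as a Cayley graph on `ℤ₄ × ℤ₄`. -/
def shrikhandeSet : Set (ZMod 4 × ZMod 4) :=
  {(0, 1), (1, 0), (0, 3), (3, 0), (1, 1), (3, 3)}

/-- The vertex set of the graph `D(m,n)`. -/
abbrev DoobV (m n : ℕ) := (Fin m → ZMod 4 × ZMod 4) × (Fin n → ZMod 4)

/-- The graph `D(m,n)`: the direct product of `m` copies of the Shrikhande graph and
`n` copies of `K₄`. Two vertices are adjacent iff they differ in exactly one
coordinate and, if it is a Shrikhande coordinate, the difference there lies in the
connecting set. For `m > 0` it is a Doob graph; `D(0,n) = H(n,4)`. -/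
def doobGraph (m n : ℕ) : SimpleGraph (DoobV m n) :=
  SimpleGraph.fromRel (fun x y =>
    (∃ i, x.1 i - y.1 i ∈ shrikhandeSet ∧ (∀ j, j ≠ i → x.1 j = y.1 j) ∧ x.2 = y.2) ∨
    (∃ i, x.2 i ≠ y.2 i ∧ (∀ j, j ≠ i → x.2 j = y.2 j) ∧ x.1 = y.1))

/-- The projection (puncturing) of a code in `D(m,n)` at the `K₄` coordinate `i`. -/
def doobProj {m n : ℕ} (i : Fin n) (C : Set (DoobV m n)) : Set (DoobV m (n - 1)) :=
  (fun x => (x.1, deleteCoord i x.2)) '' C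

/-- A code `C` in `D(m,n)`, `n ≥ 1`, is extended `1`-perfect if it is nonempty, its code
distance is `4`, and its projection at some `K₄` coordinate is a `1`-perfect code in
`D(m,n-1)`. A code `C` in `D(m,0)` is extended `1`-perfect if it is nonempty, its code
distance is `4`, and `2m = (4^l+2)/3` and `|C| = 4^(2m-l-1)` for some `l ≥ 1`. -/
def IsExtOnePerfectD (m n : ℕ) (C : Set (DoobV m n)) : Prop :=
  C.Nonempty ∧ codeDist (doobGraph m n) C = 4 ∧
    (if n = 0 then
        ∃ l : ℕ, 0 < l ∧ 3 * (2 * m) = 4 ^ l + 2 ∧ C.ncard = 4 ^ (2 * m - l - 1)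
      else ∃ i : Fin n, IsOnePerfect (doobGraph m (n - 1)) (doobProj i C))

/-- difference support -/
def diffs {m : ℕ} {α : Type*} [DecidableEq α] (x y : Fin m → α) : Finset (Fin m) :=
  Finset.univ.filter fun k => x k ≠ y k

lemma mem_diffs {m : ℕ} {α : Type*} [DecidableEq α] {x y : Fin m → α} {k : Fin m} :
    k ∈ diffs x y ↔ x k ≠ y k := by simp [diffs]

lemma hammingDist_eq_card_diffs {m : ℕ} {α : Type*} [DecidableEq α] (x y : Fin m → α) :
    hammingDist x y = (diffs x y).card := rfl

lemma diffs_sub_union {m : ℕ} {α : Type*} [DecidableEq α] (x y z : Fin m → α) :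
    diffs x z ⊆ diffs x y ∪ diffs y z := by
  intro k hk
  rw [mem_diffs] at hk
  simp only [Finset.mem_union, mem_diffs]
  by_contra h
  push_neg at h
  exact hk (h.1.trans h.2)

lemma diffs_update_self {m : ℕ} {α : Type*} [DecidableEq α] {x : Fin m → α} {k : Fin m}
    {v : α} (hv : x k ≠ v) : diffs x (Function.update x k v) = {k} := by
  ext l
  simp only [mem_diffs, Finset.mem_singleton, Function.update]
  rcases eq_or_ne l k with rfl | hl
  · simpa using hv
  · simp [hl]

lemma diffs_update_toward {m : ℕ} {α : Type*} [DecidableEq α] (x y : Fin m → α) (k : Fin m) :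
    diffs (Function.update x k (y k)) y = (diffs x y).erase k := by
  ext l
  simp only [mem_diffs, Finset.mem_erase, Function.update]
  rcases eq_or_ne l k with rfl | hl
  · simp
  · simp [hl]

lemma ham_le_walk_length {m q : ℕ} {x y : Fin m → ZMod q} (p : (hammingGraph m q).Walk x y) :
    hammingDist x y ≤ p.length := by
  induction p with
  | nil => simp
  | @cons u v w h p ih =>
      calc hammingDist u w ≤ hammingDist u v + hammingDist v w := hammingDist_triangle _ _ _
        _ ≤ 1 + p.length := by
            have : hammingDist u v = 1 := h
            omega
        _ = (SimpleGraph.Walk.cons h p).length := by simp [SimpleGraph.Walk.length_cons]; omega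

lemma exists_walk_ham {m q : ℕ} (x y : Fin m → ZMod q) :
    ∃ p : (hammingGraph m q).Walk x y, p.length = hammingDist x y := by
  generalize hd : hammingDist x y = d
  induction d generalizing x with
  | zero =>
      obtain rfl : x = y := hammingDist_eq_zero.mp hd
      exact ⟨SimpleGraph.Walk.nil, rfl⟩
  | succ d ih =>
      have hne : x ≠ y := by
        intro h; rw [h, hammingDist_self] at hd; omega
      have hnonempty : (diffs x y).Nonempty := by
        rw [← Finset.card_pos, ← hammingDist_eq_card_diffs]; omega
      obtain ⟨k, hk⟩ := hnonempty
      rw [mem_diffs] at hk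
      set x1 := Function.update x k (y k) with hx1
      have hadj : (hammingGraph m q).Adj x x1 := by
        show hammingDist x x1 = 1
        rw [hammingDist_eq_card_diffs, hx1, diffs_update_self hk, Finset.card_singleton]
      have hd1 : hammingDist x1 y = d := by
        have := hammingDist_eq_card_diffs x y
        rw [hammingDist_eq_card_diffs, hx1, diffs_update_toward,
          Finset.card_erase_of_mem (by rw [mem_diffs]; exact hk),
          ← hammingDist_eq_card_diffs, hd]
        omega
      obtain ⟨p, hp⟩ := ih x1 hd1
      exact ⟨SimpleGraph.Walk.cons hadj p, by simp [SimpleGraph.Walk.length_cons, hp]⟩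

lemma hg_dist_eq {m q : ℕ} (x y : Fin m → ZMod q) :
    (hammingGraph m q).dist x y = hammingDist x y := by
  obtain ⟨p, hp⟩ := exists_walk_ham x y
  refine le_antisymm (hp ▸ SimpleGraph.dist_le p) ?_
  obtain ⟨p', hp'⟩ := SimpleGraph.Reachable.exists_walk_length_eq_dist ⟨p⟩
  exact hp' ▸ ham_le_walk_length p'

/-- the embedding of coordinates used by `deleteCoord` -/
def emb {n : ℕ} (i : Fin n) (j : Fin (n - 1)) : Fin n :=
  Fin.cast (show n - 1 + 1 = n by have := i.pos; omega)
    ((Fin.cast (show n = n - 1 + 1 by have := i.pos; omega) i).succAbove j)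

lemma deleteCoord_apply {α : Type*} {n : ℕ} (i : Fin n) (c : Fin n → α) (j : Fin (n - 1)) :
    deleteCoord i c j = c (emb i j) := rfl

lemma emb_ne {n : ℕ} (i : Fin n) (j : Fin (n - 1)) : emb i j ≠ i := by
  unfold emb
  intro h
  have h2 := congrArg (Fin.cast (show n = n - 1 + 1 by have := i.pos; omega)) h
  simp only [Fin.cast_cast, Fin.cast_eq_self] at h2
  exact Fin.succAbove_ne _ j h2

lemma emb_injective {n : ℕ} (i : Fin n) : Function.Injective (emb i) := by
  intro a b h
  unfold emb at h
  have := (Fin.cast_injective _) h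
  exact Fin.succAbove_right_injective this

lemma emb_surj {n : ℕ} (i : Fin n) (k : Fin n) (hk : k ≠ i) : ∃ j, emb i j = k := by
  have hpos := i.pos
  have h1 : n = n - 1 + 1 := by omega
  have hk' : Fin.cast h1 k ≠ Fin.cast h1 i := by
    intro h; exact hk ((Fin.cast_injective h1) h)
  obtain ⟨j, hj⟩ := Fin.exists_succAbove_eq hk'
  refine ⟨j, ?_⟩
  unfold emb
  rw [hj]
  simp [Fin.ext_iff]

lemma ham_split {n q : ℕ} (i : Fin n) (x y : Fin n → ZMod q) :
    hammingDist x y =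
      hammingDist (deleteCoord i x) (deleteCoord i y) + (if x i = y i then 0 else 1) := by
  rw [hammingDist_eq_card_diffs, hammingDist_eq_card_diffs]
  have himg : ∀ {b : Finset (Fin n)}, b = (diffs (deleteCoord i x) (deleteCoord i y)).image (emb i) →
      (diffs x y).erase i = b := by
    intro b hb
    subst hb
    ext k
    simp only [Finset.mem_erase, mem_diffs, Finset.mem_image]
    constructor
    · rintro ⟨hki, hk⟩
      obtain ⟨j, rfl⟩ := emb_surj i k hki
      exact ⟨j, by simpa [deleteCoord_apply] using hk, rfl⟩
    · rintro ⟨j, hj, rfl⟩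
      exact ⟨emb_ne i j, by simpa [deleteCoord_apply] using hj⟩
  have hcard : ((diffs x y).erase i).card = (diffs (deleteCoord i x) (deleteCoord i y)).card := by
    rw [himg rfl, Finset.card_image_of_injective _ (emb_injective i)]
  by_cases hxy : x i = y i
  · have : i ∉ diffs x y := by simp [mem_diffs, hxy]
    rw [if_pos hxy, add_zero, ← hcard, Finset.erase_eq_of_notMem this]
  · have : i ∈ diffs x y := by simp [mem_diffs, hxy]
    rw [if_neg hxy, ← hcard, Finset.card_erase_of_mem this]
    have : 0 < (diffs x y).card := Finset.card_pos.mpr ⟨i, this⟩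
    omega

lemma cover_structure {m q : ℕ} (D : Set (Fin m → ZMod q))
    (hD3 : ∀ a ∈ D, ∀ b ∈ D, a ≠ b → 3 ≤ hammingDist a b)
    {c' : Fin m → ZMod q} (hc' : c' ∈ D) {j k : Fin m} (hkj : k ≠ j)
    {b β : ZMod q} (hb : b ≠ c' j) (hβ : β ≠ c' k)
    {d : Fin m → ZMod q} (hd : d ∈ D)
    (hcov : hammingDist (Function.update (Function.update c' j b) k β) d ≤ 1) :
    hammingDist c' d = 3 ∧ d j = b ∧ d k = β := by
  set y := Function.update (Function.update c' j b) k β with hy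
  have hyj : y j = b := by
    rw [hy, Function.update_of_ne (Ne.symm hkj), Function.update_self]
  have hyk : y k = β := by rw [hy, Function.update_self]
  have hyl : ∀ l, l ≠ j → l ≠ k → y l = c' l := fun l h1 h2 => by
    rw [hy, Function.update_of_ne h2, Function.update_of_ne h1]
  have hdiffs : diffs c' y = {j, k} := by
    ext l
    simp only [mem_diffs, Finset.mem_insert, Finset.mem_singleton]
    constructor
    · intro hl
      by_contra hc; push_neg at hc
      exact hl (hyl l hc.1 hc.2).symm
    · rintro (rfl | rfl)
      · rw [hyj]; exact fun h => hb h.symm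
      · rw [hyk]; exact fun h => hβ h.symm
  have hd2 : hammingDist c' y = 2 := by
    rw [hammingDist_eq_card_diffs, hdiffs,
      Finset.card_insert_of_notMem (by simp [Ne.symm hkj]), Finset.card_singleton]
  have hdc : d ≠ c' := by
    intro h
    rw [← h, hammingDist_comm] at hd2
    omega
  have h3 : 3 ≤ hammingDist c' d := hD3 _ hc' _ hd (Ne.symm hdc)
  have hcd3 : hammingDist c' d = 3 := by
    have := hammingDist_triangle c' y d
    omega
  have hcard1 : (diffs y d).card ≤ 1 := by
    rw [← hammingDist_eq_card_diffs]; exact hcov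
  have key : ∀ l l', y l ≠ d l → l' ≠ l → y l' = d l' := by
    intro l l' h1 h2
    by_contra h3'
    have hsub : ({l, l'} : Finset (Fin m)) ⊆ diffs y d := by
      intro z hz
      simp only [Finset.mem_insert, Finset.mem_singleton] at hz
      rcases hz with rfl | rfl
      · exact mem_diffs.mpr h1
      · exact mem_diffs.mpr h3'
    have hle := Finset.card_le_card hsub
    rw [Finset.card_insert_of_notMem (by simpa using Ne.symm h2), Finset.card_singleton] at hle
    omega
  have hjk2 : ({j, k} : Finset (Fin m)).card ≤ 2 := by
    refine le_trans (Finset.card_insert_le _ _) ?_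
    simp
  have hdj : d j = b := by
    by_contra hdj
    have h1 : y j ≠ d j := by rw [hyj]; exact fun h => hdj h.symm
    have hsub : diffs c' d ⊆ {j, k} := by
      intro l hl
      rw [mem_diffs] at hl
      simp only [Finset.mem_insert, Finset.mem_singleton]
      by_contra hc; push_neg at hc
      have := key j l h1 hc.1
      rw [hyl l hc.1 hc.2] at this
      exact hl this
    have := Finset.card_le_card hsub
    rw [← hammingDist_eq_card_diffs, hcd3] at this
    omega
  have hdk : d k = β := by
    by_contra hdk
    have h1 : y k ≠ d k := by rw [hyk]; exact fun h => hdk h.symm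
    have hsub : diffs c' d ⊆ {j, k} := by
      intro l hl
      rw [mem_diffs] at hl
      simp only [Finset.mem_insert, Finset.mem_singleton]
      by_contra hc; push_neg at hc
      have := key k l h1 hc.2
      rw [hyl l hc.1 hc.2] at this
      exact hl this
    have := Finset.card_le_card hsub
    rw [← hammingDist_eq_card_diffs, hcd3] at this
    omega
  exact ⟨hcd3, hdj, hdk⟩

/-- Proposition 2 (Statement 12): if there is an extended `1`-perfect code in `H(n,q)`,
then `n` is even. -/
theorem statement12 (n q : ℕ) (hn : 2 ≤ n) (hq : 2 ≤ q)
    (h : ∃ C : Set (Fin n → ZMod q), IsExtOnePerfectH n q C) : Even n := by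
  by_contra hodd
  have hoddn : Odd n := Nat.not_even_iff_odd.mp hodd
  have hn3 : 3 ≤ n := by obtain ⟨t, ht⟩ := hoddn; omega
  haveI : NeZero q := ⟨by omega⟩
  haveI : Fact (1 < q) := ⟨by omega⟩
  classical
  obtain ⟨C, hCne, hCd, i, hperf⟩ := h
  have hperf' : ∀ x : Fin (n-1) → ZMod q, ∃! d, d ∈ hammingProj i C ∧ hammingDist x d ≤ 1 := by
    intro x
    have := hperf x
    simpa only [hg_dist_eq] using this
  have hC4 : ∀ c1 ∈ C, ∀ c2 ∈ C, c1 ≠ c2 → 4 ≤ hammingDist c1 c2 := by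
    intro c1 h1 c2 h2 hne
    have hmem : hammingDist c1 c2 ∈
        {d : ℕ | ∃ x ∈ C, ∃ y ∈ C, x ≠ y ∧ (hammingGraph n q).dist x y = d} :=
      ⟨c1, h1, c2, h2, hne, hg_dist_eq c1 c2⟩
    have h1' : codeDist (hammingGraph n q) C ≤ hammingDist c1 c2 := Nat.sInf_le hmem
    rwa [hCd] at h1'
  have hD3 : ∀ a ∈ hammingProj i C, ∀ b ∈ hammingProj i C, a ≠ b → 3 ≤ hammingDist a b := by
    intro a ha b hb hne
    by_contra hlt
    push_neg at hlt
    have hne0 : hammingDist a b ≠ 0 := hammingDist_ne_zero.mpr hne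
    obtain ⟨k, hk⟩ : (diffs a b).Nonempty := by
      rw [← Finset.card_pos, ← hammingDist_eq_card_diffs]; omega
    rw [mem_diffs] at hk
    set z := Function.update a k (b k) with hz
    have hza : hammingDist z a ≤ 1 := by
      rw [hammingDist_comm, hammingDist_eq_card_diffs, hz, diffs_update_self hk]
      simp
    have hzb : hammingDist z b ≤ 1 := by
      rw [hammingDist_eq_card_diffs, hz, diffs_update_toward,
        Finset.card_erase_of_mem (mem_diffs.mpr hk), ← hammingDist_eq_card_diffs]
      omega
    obtain ⟨d0, _, huniq⟩ := hperf' z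
    exact hne ((huniq a ⟨ha, hza⟩).trans (huniq b ⟨hb, hzb⟩).symm)
  obtain ⟨c, hc⟩ := hCne
  set c' := deleteCoord i c with hc'
  have hc'D : c' ∈ hammingProj i C := ⟨c, hc, rfl⟩
  set j : Fin (n-1) := ⟨0, by omega⟩ with hjdef
  obtain ⟨b, hb⟩ := exists_ne (c' j)
  -- the covering-codeword lift map
  have hex : ∀ p : (_ : Fin (n-1)) × ZMod q, ∃ t, t ∈ C ∧
      hammingDist (Function.update (Function.update c' j b) p.1 p.2) (deleteCoord i t) ≤ 1 := by
    intro p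
    obtain ⟨d0, ⟨hd0D, hd0⟩, -⟩ := hperf' (Function.update (Function.update c' j b) p.1 p.2)
    obtain ⟨t, ht, rfl⟩ := hd0D
    exact ⟨t, ht, hd0⟩
  set φ : ((_ : Fin (n-1)) × ZMod q) → (Fin n → ZMod q) := fun p => (hex p).choose with hφ
  have hφspec : ∀ p, (φ p) ∈ C ∧
      hammingDist (Function.update (Function.update c' j b) p.1 p.2) (deleteCoord i (φ p)) ≤ 1 :=
    fun p => (hex p).choose_spec
  set T : Finset (Fin n → ZMod q) := Finset.univ.filter
      (fun t => t ∈ C ∧ hammingDist (deleteCoord i t) c' = 3 ∧ deleteCoord i t j = b) with hT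
  have hstep1 : ∀ p : (_ : Fin (n-1)) × ZMod q, p.1 ≠ j → p.2 ≠ c' p.1 →
      φ p ∈ T ∧ deleteCoord i (φ p) p.1 = p.2 := by
    intro p hp1 hp2
    obtain ⟨htC, hcov⟩ := hφspec p
    have hcs := cover_structure (hammingProj i C) hD3 hc'D hp1 hb hp2 ⟨φ p, htC, rfl⟩ hcov
    refine ⟨?_, hcs.2.2⟩
    rw [hT, Finset.mem_filter]
    exact ⟨Finset.mem_univ _, htC, by rw [hammingDist_comm]; exact hcs.1, hcs.2.1⟩
  set Y : Finset ((_ : Fin (n-1)) × ZMod q) :=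
    (Finset.univ.erase j).sigma (fun k => Finset.univ.erase (c' k)) with hY
  have hYcard : Y.card = (n - 1 - 1) * (q - 1) := by
    rw [hY, Finset.card_sigma]
    have hcol : ∀ k, (Finset.univ.erase (c' k)).card = q - 1 := by
      intro k
      rw [Finset.card_erase_of_mem (Finset.mem_univ _), Finset.card_univ, ZMod.card]
    rw [Finset.sum_congr rfl (fun k _ => hcol k), Finset.sum_const, smul_eq_mul,
      Finset.card_erase_of_mem (Finset.mem_univ _), Finset.card_univ, Fintype.card_fin]
  have hYT : Y.card ≤ 2 * T.card := by
    refine Finset.card_le_mul_card_image_of_maps_to (f := φ) ?_ 2 ?_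
    · intro p hp
      rw [hY, Finset.mem_sigma] at hp
      exact (hstep1 p (Finset.ne_of_mem_erase hp.1) (Finset.ne_of_mem_erase hp.2)).1
    · intro t ht
      rw [hT, Finset.mem_filter] at ht
      obtain ⟨-, htC, htd3, htj⟩ := ht
      have hjmem : j ∈ diffs c' (deleteCoord i t) := by
        rw [mem_diffs, htj]
        exact fun h => hb h.symm
      have hsub : Y.filter (fun p => φ p = t) ⊆
          ((diffs c' (deleteCoord i t)).erase j).sigma (fun k => {deleteCoord i t k}) := by
        intro p hp
        rw [Finset.mem_filter] at hp
        obtain ⟨hpY, hpφ⟩ := hp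
        rw [hY, Finset.mem_sigma] at hpY
        have h1 := hstep1 p (Finset.ne_of_mem_erase hpY.1) (Finset.ne_of_mem_erase hpY.2)
        rw [hpφ] at h1
        rw [Finset.mem_sigma, Finset.mem_erase, mem_diffs, Finset.mem_singleton]
        refine ⟨⟨Finset.ne_of_mem_erase hpY.1, ?_⟩, h1.2.symm⟩
        rw [h1.2]
        exact fun hh => (Finset.ne_of_mem_erase hpY.2) hh.symm
      have hcle := Finset.card_le_card hsub
      rw [Finset.card_sigma] at hcle
      simp only [Finset.card_singleton] at hcle
      rw [Finset.sum_const, smul_eq_mul, mul_one, Finset.card_erase_of_mem hjmem,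
        ← hammingDist_eq_card_diffs, hammingDist_comm, htd3] at hcle
      exact le_trans hcle (by norm_num)
  set A : Finset (ZMod q) := Finset.univ.erase (c i) with hA
  have hAcard : A.card = q - 1 := by
    rw [hA, Finset.card_erase_of_mem (Finset.mem_univ _), Finset.card_univ, ZMod.card]
  have hTA : ∀ t ∈ T, t i ∈ A := by
    intro t ht
    rw [hT, Finset.mem_filter] at ht
    obtain ⟨-, htC, htd3, -⟩ := ht
    have htc : t ≠ c := by
      intro hh
      rw [hh, ← hc', hammingDist_self] at htd3
      omega
    have h4 := hC4 t htC c hc htc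
    have hsplit := ham_split i t c
    rw [← hc', htd3] at hsplit
    rw [hA, Finset.mem_erase]
    refine ⟨?_, Finset.mem_univ _⟩
    intro hti
    rw [if_pos hti] at hsplit
    omega
  have hfib : T.card = ∑ a ∈ A, (T.filter fun t => t i = a).card :=
    Finset.card_eq_sum_card_fiberwise hTA
  have hstep5 : ∀ a ∈ A, 2 * (T.filter fun t => t i = a).card + 2 ≤ n := by
    intro a ha
    rw [hA, Finset.mem_erase] at ha
    set x : Fin n → ZMod q := Function.update (Function.update c (emb i j) b) i a with hx
    have hxi : x i = a := by rw [hx, Function.update_self]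
    have hxe : x (emb i j) = b := by
      rw [hx, Function.update_of_ne (emb_ne i j), Function.update_self]
    have hxl : ∀ l, l ≠ i → l ≠ emb i j → x l = c l := fun l h1 h2 => by
      rw [hx, Function.update_of_ne h1, Function.update_of_ne h2]
    set S := insert c (T.filter fun t => t i = a) with hS
    have hSmem : ∀ t ∈ S, t ∈ C ∧ hammingDist x t = 2 := by
      intro t ht
      rw [hS, Finset.mem_insert] at ht
      rcases ht with rfl | ht
      · refine ⟨hc, ?_⟩
        rw [hammingDist_eq_card_diffs]
        have hdd : diffs x t = {i, emb i j} := by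
          ext l
          simp only [mem_diffs, Finset.mem_insert, Finset.mem_singleton]
          constructor
          · intro hl
            by_contra hcon; push_neg at hcon
            exact hl (hxl l hcon.1 hcon.2)
          · rintro (rfl | rfl)
            · rw [hxi]; exact ha.1
            · rw [hxe]
              exact fun hh => hb hh
        rw [hdd, Finset.card_insert_of_notMem (by simpa using (emb_ne i j).symm),
          Finset.card_singleton]
      · rw [Finset.mem_filter, hT, Finset.mem_filter] at ht
        obtain ⟨⟨-, htC, htd3, htj⟩, hti⟩ := ht
        refine ⟨htC, ?_⟩
        have hπx : deleteCoord i x = Function.update c' j b := by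
          funext l
          rw [deleteCoord_apply]
          rcases eq_or_ne l j with rfl | hl
          · rw [Function.update_self]; exact hxe
          · rw [Function.update_of_ne hl, hc', deleteCoord_apply]
            exact hxl _ (emb_ne i l) (fun hh => hl (emb_injective i hh))
        have hsplit := ham_split i x t
        rw [hπx, if_pos (by rw [hxi, hti])] at hsplit
        have hupd : Function.update c' j b = Function.update c' j (deleteCoord i t j) := by
          rw [htj]
        rw [hupd] at hsplit
        rw [hammingDist_eq_card_diffs (Function.update c' j (deleteCoord i t j)),
          diffs_update_toward] at hsplit
        have hjm : j ∈ diffs c' (deleteCoord i t) := by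
          rw [mem_diffs, htj]
          exact fun hh => hb hh.symm
        rw [Finset.card_erase_of_mem hjm, ← hammingDist_eq_card_diffs] at hsplit
        rw [hammingDist_comm] at htd3
        rw [htd3] at hsplit
        clear * - hsplit
        omega
    have hdisj : ∀ t1 ∈ S, ∀ t2 ∈ S, t1 ≠ t2 →
        Disjoint (diffs x t1) (diffs x t2) := by
      intro t1 h1 t2 h2 hne
      obtain ⟨h1C, h1d⟩ := hSmem t1 h1
      obtain ⟨h2C, h2d⟩ := hSmem t2 h2
      rw [Finset.disjoint_left]
      intro z hz1 hz2
      have h4 := hC4 t1 h1C t2 h2C hne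
      have hsubu : diffs t1 t2 ⊆ diffs t1 x ∪ diffs x t2 := diffs_sub_union t1 x t2
      have hcomm : diffs t1 x = diffs x t1 := by
        ext l; simp only [mem_diffs]; exact ne_comm
      rw [hcomm] at hsubu
      have hcu := Finset.card_union_add_card_inter (diffs x t1) (diffs x t2)
      have hzm : z ∈ diffs x t1 ∩ diffs x t2 := Finset.mem_inter.mpr ⟨hz1, hz2⟩
      have hip : 0 < (diffs x t1 ∩ diffs x t2).card := Finset.card_pos.mpr ⟨z, hzm⟩
      have h12 := Finset.card_le_card hsubu
      rw [← hammingDist_eq_card_diffs] at h12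
      rw [← hammingDist_eq_card_diffs, ← hammingDist_eq_card_diffs] at hcu
      rw [h1d, h2d] at hcu
      clear * - hcu h12 h4 hip
      omega
    have hbiu : (S.biUnion (fun t => diffs x t)).card = ∑ t ∈ S, (diffs x t).card :=
      Finset.card_biUnion hdisj
    have hle : (S.biUnion (fun t => diffs x t)).card ≤ n := by
      refine le_trans (Finset.card_le_card (Finset.subset_univ _)) ?_
      simp
    have hsum : ∑ t ∈ S, (diffs x t).card = 2 * S.card := by
      have hconst : ∀ t ∈ S, (diffs x t).card = 2 := fun t ht => by
        rw [← hammingDist_eq_card_diffs]; exact (hSmem t ht).2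
      rw [Finset.sum_congr rfl hconst, Finset.sum_const, smul_eq_mul, mul_comm]
    have hcnot : c ∉ (T.filter fun t => t i = a) := by
      intro hcmem
      rw [Finset.mem_filter, hT, Finset.mem_filter] at hcmem
      obtain ⟨⟨-, -, hd3, -⟩, -⟩ := hcmem
      rw [← hc', hammingDist_self] at hd3
      exact absurd hd3 (by norm_num)
    have hScard : S.card = (T.filter fun t => t i = a).card + 1 := by
      rw [hS, Finset.card_insert_of_notMem hcnot]
    rw [hbiu, hsum, hScard, Nat.mul_add, Nat.mul_one] at hle
    exact hle
  have hTa3 : ∀ a ∈ A, 2 * (T.filter fun t => t i = a).card ≤ n - 3 := by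
    intro a ha
    have h5 := hstep5 a ha
    obtain ⟨t, ht⟩ := hoddn
    revert h5
    generalize (Finset.filter (fun t => t i = a) T).card = mm
    intro h5
    clear * - h5 ht hn3
    omega
  have h2T : 2 * T.card ≤ (q - 1) * (n - 3) := by
    rw [hfib, Finset.mul_sum]
    calc (∑ a ∈ A, 2 * (T.filter fun t => t i = a).card)
        ≤ ∑ _a ∈ A, (n - 3) := Finset.sum_le_sum hTa3
      _ = (q - 1) * (n - 3) := by rw [Finset.sum_const, smul_eq_mul, hAcard]
  rw [hYcard] at hYT
  have hfin : (q - 1) * (n - 1 - 1) ≤ (q - 1) * (n - 3) := by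
    calc (q - 1) * (n - 1 - 1) = (n - 1 - 1) * (q - 1) := mul_comm _ _
      _ ≤ 2 * T.card := hYT
      _ ≤ (q - 1) * (n - 3) := h2T
  have hq1 : 0 < q - 1 := by clear hfib; omega
  have hfin2 := Nat.le_of_mul_le_mul_left hfin hq1
  clear * - hfin2 hn3
  omega
end

section
/- Let q ≥ 3 be odd. Then there does not exist an MDS code with distance 4 in the Hamming graph H(q+2,q); that is, there is no code C in H(q+2,q) with code distance 4 and |C| = q^{q−1}. -/
open Finset Function

section Helpers

variable {n q : ℕ}

lemma ham_filter (x y : Fin n → ZMod q) :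
    hammingDist x y = (Finset.univ.filter fun j => x j ≠ y j).card := rfl

lemma mem_ham_filter {x y : Fin n → ZMod q} {j : Fin n} :
    j ∈ (Finset.univ.filter fun j => x j ≠ y j) ↔ x j ≠ y j := by simp

lemma ham_le_one_of_agree {x y : Fin n → ZMod q} {i : Fin n}
    (h : ∀ j, j ≠ i → x j = y j) : hammingDist x y ≤ 1 := by
  rw [ham_filter]
  have hsub : (Finset.univ.filter fun j => x j ≠ y j) ⊆ {i} := by
    intro j hj
    rw [mem_ham_filter] at hj
    simp only [Finset.mem_singleton]
    by_contra hne
    exact hj (h j hne)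
  calc (Finset.univ.filter fun j => x j ≠ y j).card ≤ ({i} : Finset (Fin n)).card :=
        Finset.card_le_card hsub
    _ = 1 := Finset.card_singleton i

lemma ham_eq_one_elim {x y : Fin n → ZMod q} (h : hammingDist x y = 1) :
    ∃ m, x m ≠ y m ∧ ∀ j, j ≠ m → x j = y j := by
  rw [ham_filter, Finset.card_eq_one] at h
  obtain ⟨m, hm⟩ := h
  refine ⟨m, ?_, ?_⟩
  · have : m ∈ (Finset.univ.filter fun j => x j ≠ y j) := hm ▸ Finset.mem_singleton_self m
    exact mem_ham_filter.1 this
  · intro j hj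
    by_contra hne
    have : j ∈ (Finset.univ.filter fun j => x j ≠ y j) := mem_ham_filter.2 hne
    rw [hm, Finset.mem_singleton] at this
    exact hj this

lemma agree_off_of_update_eq {x y : Fin n → ZMod q} {i : Fin n}
    (h : Function.update x i 0 = Function.update y i 0) :
    ∀ j, j ≠ i → x j = y j := by
  intro j hj
  have := congrFun h j
  rwa [Function.update_of_ne hj, Function.update_of_ne hj] at this

lemma update_eq_of_agree_off {x y : Fin n → ZMod q} {i : Fin n}
    (h : ∀ j, j ≠ i → x j = y j) :
    Function.update x i 0 = Function.update y i 0 := by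
  funext j
  by_cases hj : j = i
  · subst hj; simp
  · rw [Function.update_of_ne hj, Function.update_of_ne hj]; exact h j hj

/-- A walk realizing the Hamming distance exists. -/
lemma exists_walk (x y : Fin n → ZMod q) :
    ∃ w : (hammingGraph n q).Walk x y, w.length = hammingDist x y := by
  generalize hk : hammingDist x y = k
  induction k generalizing x with
  | zero =>
    have : x = y := eq_of_hammingDist_eq_zero hk
    subst this
    exact ⟨SimpleGraph.Walk.nil, rfl⟩
  | succ k ih =>
    have hpos : 0 < hammingDist x y := by omega
    rw [ham_filter, Finset.card_pos] at hpos
    obtain ⟨i, hi⟩ := hpos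
    rw [mem_ham_filter] at hi
    set x' := Function.update x i (y i) with hx'
    have hstep : hammingDist x' y = k := by
      have : (Finset.univ.filter fun j => x j ≠ y j)
          = insert i (Finset.univ.filter fun j => x' j ≠ y j) := by
        ext j
        by_cases hj : j = i
        · subst hj
          simp [hi, hx']
        · simp only [Finset.mem_insert, mem_ham_filter, hj, false_or, hx',
            Function.update_of_ne hj]
      have hnotmem : i ∉ (Finset.univ.filter fun j => x' j ≠ y j) := by
        simp [hx']
      have hcard := Finset.card_insert_of_notMem hnotmem
      rw [← this] at hcard
      rw [ham_filter x y] at hk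
      rw [ham_filter]
      omega
    have hadj : (hammingGraph n q).Adj x x' := by
      show hammingDist x x' = 1
      have h1 : hammingDist x x' ≤ 1 := by
        apply ham_le_one_of_agree (i := i)
        intro j hj
        rw [hx', Function.update_of_ne hj]
      have h0 : hammingDist x x' ≠ 0 := by
        rw [hammingDist_ne_zero]
        intro h
        have := congrFun h i
        rw [hx', Function.update_self] at this
        exact hi this
      omega
    obtain ⟨w, hw⟩ := ih x' hstep
    exact ⟨SimpleGraph.Walk.cons hadj w, by simp [hw, hstep]⟩

lemma dist_le_ham (x y : Fin n → ZMod q) :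
    (hammingGraph n q).dist x y ≤ hammingDist x y := by
  obtain ⟨w, hw⟩ := exists_walk x y
  calc (hammingGraph n q).dist x y ≤ w.length := SimpleGraph.dist_le w
    _ = hammingDist x y := hw

end Helpers
section Helpers2

open Finset Function

variable {n q : ℕ} [NeZero q]

/-- Cardinality of a Hamming ball of radius 1. -/
lemma ball_card (c : Fin n → ZMod q) :
    (Finset.univ.filter fun y : Fin n → ZMod q => hammingDist y c ≤ 1).card
      = 1 + n * (q - 1) := by
  classical
  have hdesc : (Finset.univ.filter fun y : Fin n → ZMod q => hammingDist y c ≤ 1)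
      = insert c ((Finset.univ : Finset (Fin n)).biUnion fun i =>
          ((Finset.univ.erase (c i)).image fun v => Function.update c i v)) := by
    ext y
    constructor
    · intro hy
      have h := (Finset.mem_filter.1 hy).2
      rcases Nat.le_one_iff_eq_zero_or_eq_one.1 h with h0 | h1
      · exact Finset.mem_insert.2 (Or.inl (eq_of_hammingDist_eq_zero h0))
      · obtain ⟨m, hm, hagree⟩ := ham_eq_one_elim h1
        refine Finset.mem_insert.2 (Or.inr ?_)
        refine Finset.mem_biUnion.2 ⟨m, Finset.mem_univ _, ?_⟩
        refine Finset.mem_image.2 ⟨y m, Finset.mem_erase.2 ⟨hm, Finset.mem_univ _⟩, ?_⟩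
        funext j
        by_cases hj : j = m
        · subst hj; simp
        · rw [Function.update_of_ne hj]; exact (hagree j hj).symm
    · intro hy
      rcases Finset.mem_insert.1 hy with rfl | hy'
      · exact Finset.mem_filter.2 ⟨Finset.mem_univ _, by simp⟩
      · obtain ⟨i, -, hyi⟩ := Finset.mem_biUnion.1 hy'
        obtain ⟨v, hv, rfl⟩ := Finset.mem_image.1 hyi
        refine Finset.mem_filter.2 ⟨Finset.mem_univ _, ?_⟩
        apply ham_le_one_of_agree (i := i)
        intro j hj
        rw [Function.update_of_ne hj]
  rw [hdesc]
  have hnotmem : c ∉ ((Finset.univ : Finset (Fin n)).biUnion fun i =>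
      ((Finset.univ.erase (c i)).image fun v => Function.update c i v)) := by
    intro hc
    obtain ⟨i, -, hci⟩ := Finset.mem_biUnion.1 hc
    obtain ⟨v, hv, hupd⟩ := Finset.mem_image.1 hci
    have := congrFun hupd i
    rw [Function.update_self] at this
    exact (Finset.mem_erase.1 hv).1 this
  rw [Finset.card_insert_of_notMem hnotmem]
  have hdisj : ∀ i ∈ (Finset.univ : Finset (Fin n)), ∀ j ∈ (Finset.univ : Finset (Fin n)),
      i ≠ j → Disjoint ((Finset.univ.erase (c i)).image fun v => Function.update c i v)
        ((Finset.univ.erase (c j)).image fun v => Function.update c j v) := by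
    intro i _ j _ hij
    rw [Finset.disjoint_left]
    intro y hy hy'
    obtain ⟨v, hv, rfl⟩ := Finset.mem_image.1 hy
    obtain ⟨w, hw, hupd⟩ := Finset.mem_image.1 hy'
    have := congrFun hupd j
    rw [Function.update_self, Function.update_of_ne (Ne.symm hij)] at this
    exact (Finset.mem_erase.1 hw).1 this
  rw [Finset.card_biUnion hdisj]
  have himg : ∀ i : Fin n,
      ((Finset.univ.erase (c i)).image fun v => Function.update c i v).card = q - 1 := by
    intro i
    rw [Finset.card_image_of_injOn]
    · rw [Finset.card_erase_of_mem (Finset.mem_univ _), Finset.card_univ, ZMod.card]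
    · intro v _ w _ hvw
      simpa using congrFun hvw i
  rw [Finset.sum_congr rfl fun i _ => himg i, Finset.sum_const, Finset.card_univ,
    Fintype.card_fin, smul_eq_mul]
  omega

/-- Cardinality of a fiber of the "zero out coordinate `i`" map. -/
lemma fiber_card (i : Fin n) (z : Fin n → ZMod q) (hz : z i = 0) :
    (Finset.univ.filter fun y : Fin n → ZMod q => Function.update y i 0 = z).card = q := by
  classical
  have hdesc : (Finset.univ.filter fun y : Fin n → ZMod q => Function.update y i 0 = z)
      = (Finset.univ : Finset (ZMod q)).image fun v => Function.update z i v := by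
    ext y
    constructor
    · intro hy
      have h := (Finset.mem_filter.1 hy).2
      refine Finset.mem_image.2 ⟨y i, Finset.mem_univ _, ?_⟩
      funext j
      by_cases hj : j = i
      · subst hj; simp
      · rw [Function.update_of_ne hj]
        have := congrFun h j
        rw [Function.update_of_ne hj] at this
        exact this.symm
    · intro hy
      obtain ⟨v, -, rfl⟩ := Finset.mem_image.1 hy
      refine Finset.mem_filter.2 ⟨Finset.mem_univ _, ?_⟩
      funext j
      by_cases hj : j = i
      · subst hj; simp [hz]
      · rw [Function.update_of_ne hj, Function.update_of_ne hj]
  rw [hdesc, Finset.card_image_of_injOn, Finset.card_univ, ZMod.card]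
  intro v _ w _ hvw
  simpa using congrFun hvw i

/-- A fixed-point-free involution forces even cardinality. -/
lemma even_of_involution {m : ℕ} (σ : Fin m → Fin m)
    (hinv : ∀ i, σ (σ i) = i) (hfp : ∀ i, σ i ≠ i) : Even m := by
  classical
  set s := Finset.univ.filter (fun i : Fin m => i < σ i) with hs
  set t := Finset.univ.filter (fun i : Fin m => ¬ i < σ i) with ht
  have hst : s.card = t.card := by
    apply Finset.card_bij (fun i _ => σ i)
    · intro a ha
      rw [hs, Finset.mem_filter] at ha
      rw [ht, Finset.mem_filter]
      refine ⟨Finset.mem_univ _, ?_⟩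
      rw [hinv a]
      exact not_lt_of_gt ha.2
    · intro a _ b _ hab
      have := congrArg σ hab
      rwa [hinv, hinv] at this
    · intro b hb
      rw [ht, Finset.mem_filter] at hb
      refine ⟨σ b, ?_, hinv b⟩
      rw [hs, Finset.mem_filter]
      refine ⟨Finset.mem_univ _, ?_⟩
      rw [hinv b]
      rcases lt_or_gt_of_ne (hfp b) with h | h
      · exact h
      · exact absurd h hb.2
  have hpart : s.card + t.card = m := by
    rw [hs, ht, Finset.card_filter_add_card_filter_not, Finset.card_univ,
      Fintype.card_fin]
  exact ⟨s.card, by omega⟩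

end Helpers2
section KeyLemma

open Finset Function

/-- Key counting lemma: around any vertex at distance ≥ 2 from an MDS distance-4 code,
for every coordinate `i` there is a codeword at Hamming distance exactly 2
differing at coordinate `i`. -/
lemma key_lemma (q : ℕ) (hq : 3 ≤ q) (F : Finset (Fin (q+2) → ZMod q))
    (hFcard : F.card = q ^ (q-1))
    (d4 : ∀ c ∈ F, ∀ c' ∈ F, c ≠ c' → 4 ≤ hammingDist c c')
    (x : Fin (q+2) → ZMod q) (far : ∀ c ∈ F, 2 ≤ hammingDist x c)
    (i : Fin (q+2)) :
    ∃ c ∈ F, hammingDist x c = 2 ∧ c i ≠ x i := by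
  classical
  haveI : NeZero q := ⟨by omega⟩
  set π : (Fin (q+2) → ZMod q) → (Fin (q+2) → ZMod q) :=
    fun y => Function.update y i 0 with hπ
  set N : Finset (Fin (q+2) → ZMod q) :=
    Finset.univ.filter (fun y => ∃ c ∈ F, hammingDist y c ≤ 1) with hNdef
  set B : Finset (Fin (q+2) → ZMod q) :=
    Finset.univ.filter (fun y => ∃ c ∈ F, π y = π c) with hBdef
  set Λ : Finset (Fin (q+2) → ZMod q) :=
    Finset.univ.filter (fun z => z i = 0) with hΛdef
  -- |N|
  have hN : N.card = F.card * (1 + (q+2) * (q-1)) := by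
    have hrw : N = F.biUnion
        (fun c => Finset.univ.filter fun y => hammingDist y c ≤ 1) := by
      ext y
      simp [hNdef]
    rw [hrw, Finset.card_biUnion]
    · rw [Finset.sum_congr rfl fun c _ => ball_card c, Finset.sum_const, smul_eq_mul]
    · intro c hc c' hc' hne
      rw [Function.onFun, Finset.disjoint_left]
      intro y hy hy'
      have h1 := (Finset.mem_filter.1 hy).2
      have h2 := (Finset.mem_filter.1 hy').2
      have : hammingDist c c' ≤ 2 := by
        calc hammingDist c c' ≤ hammingDist c y + hammingDist y c' := hammingDist_triangle _ _ _
          _ ≤ 1 + 1 := by rw [hammingDist_comm c y]; omega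
          _ = 2 := rfl
      have := d4 c hc c' hc' hne
      omega
  -- injectivity of π on F
  have hπinjF : ∀ c ∈ F, ∀ c' ∈ F, π c = π c' → c = c' := by
    intro c hc c' hc' h
    by_contra hne
    have h1 : hammingDist c c' ≤ 1 := ham_le_one_of_agree (agree_off_of_update_eq h)
    have := d4 c hc c' hc' hne
    omega
  -- |B|
  have hB : B.card = F.card * q := by
    have hrw : B = (F.image π).biUnion
        (fun z => Finset.univ.filter fun y => Function.update y i 0 = z) := by
      ext y
      simp only [hBdef, Finset.mem_filter, Finset.mem_univ, true_and, Finset.mem_biUnion,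
        Finset.mem_image]
      constructor
      · rintro ⟨c, hc, h⟩
        exact ⟨π c, ⟨c, hc, rfl⟩, h⟩
      · rintro ⟨z, ⟨c, hc, rfl⟩, h⟩
        exact ⟨c, hc, h⟩
    rw [hrw, Finset.card_biUnion]
    · have : ∀ z ∈ F.image π,
          (Finset.univ.filter fun y : Fin (q+2) → ZMod q =>
            Function.update y i 0 = z).card = q := by
        intro z hz
        obtain ⟨c, -, rfl⟩ := Finset.mem_image.1 hz
        exact fiber_card i (π c) (Function.update_self i 0 c)
      rw [Finset.sum_congr rfl this, Finset.sum_const, smul_eq_mul,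
        Finset.card_image_of_injOn (fun c hc c' hc' h => hπinjF c hc c' hc' h)]
    · intro z hz z' hz' hne
      rw [Function.onFun, Finset.disjoint_left]
      intro y hy hy'
      have h1 := (Finset.mem_filter.1 hy).2
      have h2 := (Finset.mem_filter.1 hy').2
      exact hne (h1 ▸ h2 ▸ rfl)
  -- B ⊆ N
  have hBsubN : B ⊆ N := by
    intro y hy
    obtain ⟨c, hc, h⟩ := (Finset.mem_filter.1 hy).2
    exact Finset.mem_filter.2 ⟨Finset.mem_univ _,
      ⟨c, hc, ham_le_one_of_agree (agree_off_of_update_eq h)⟩⟩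
  -- |Λ| * q = q^(q+2)
  have hΛ : Λ.card * q = q ^ (q+2) := by
    have hrw : (Finset.univ : Finset (Fin (q+2) → ZMod q)) = Λ.biUnion
        (fun z => Finset.univ.filter fun y => Function.update y i 0 = z) := by
      ext y
      constructor
      · intro _
        refine Finset.mem_biUnion.2 ⟨Function.update y i 0, ?_, ?_⟩
        · exact Finset.mem_filter.2 ⟨Finset.mem_univ _, Function.update_self i 0 y⟩
        · exact Finset.mem_filter.2 ⟨Finset.mem_univ _, rfl⟩
      · intro _
        exact Finset.mem_univ _
    have hcard : (Finset.univ : Finset (Fin (q+2) → ZMod q)).card = q ^ (q+2) := by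
      rw [Finset.card_univ, Fintype.card_fun, ZMod.card, Fintype.card_fin]
    rw [hrw, Finset.card_biUnion] at hcard
    · rw [← hcard, Finset.sum_congr rfl
        (fun z hz => fiber_card i z (Finset.mem_filter.1 hz).2), Finset.sum_const,
        smul_eq_mul]
    · intro z hz z' hz' hne
      rw [Function.onFun, Finset.disjoint_left]
      intro y hy hy'
      have h1 := (Finset.mem_filter.1 hy).2
      have h2 := (Finset.mem_filter.1 hy').2
      exact hne (h1 ▸ h2 ▸ rfl)
  set A : Finset (Fin (q+2) → ZMod q) := N \ B with hAdef
  have hA : A.card + B.card = N.card := Finset.card_sdiff_add_card_eq_card hBsubN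
  set Λf : Finset (Fin (q+2) → ZMod q) := Λ \ F.image π with hΛfdef
  have himsub : F.image π ⊆ Λ := by
    intro z hz
    obtain ⟨c, -, rfl⟩ := Finset.mem_image.1 hz
    exact Finset.mem_filter.2 ⟨Finset.mem_univ _, Function.update_self i 0 c⟩
  have hΛf : Λf.card + (F.image π).card = Λ.card :=
    Finset.card_sdiff_add_card_eq_card himsub
  have himcard : (F.image π).card = F.card :=
    Finset.card_image_of_injOn (fun c hc c' hc' h => hπinjF c hc c' hc' h)
  -- injectivity of π on A
  have hπinjA : ∀ y ∈ A, ∀ y' ∈ A, π y = π y' → y = y' := by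
    intro y hy y' hy' hπeq
    by_contra hne
    have hyN := (Finset.mem_sdiff.1 hy).1
    have hyB := (Finset.mem_sdiff.1 hy).2
    have hy'N := (Finset.mem_sdiff.1 hy').1
    have hy'B := (Finset.mem_sdiff.1 hy').2
    obtain ⟨c, hc, hle⟩ := (Finset.mem_filter.1 hyN).2
    obtain ⟨c', hc', hle'⟩ := (Finset.mem_filter.1 hy'N).2
    -- y is at distance exactly 1 from c, differing at some m ≠ i
    have hstep : ∀ (w : Fin (q+2) → ZMod q) (d : Fin (q+2) → ZMod q), d ∈ F →
        hammingDist w d ≤ 1 → w ∉ B →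
        ∃ m, m ≠ i ∧ w m ≠ d m ∧ ∀ j, j ≠ m → w j = d j := by
      intro w d hd hwd hwB
      rcases Nat.le_one_iff_eq_zero_or_eq_one.1 hwd with h0 | h1
      · exfalso
        have : w = d := eq_of_hammingDist_eq_zero h0
        subst this
        exact hwB (Finset.mem_filter.2 ⟨Finset.mem_univ _, ⟨w, hd, rfl⟩⟩)
      · obtain ⟨m, hm, hagree⟩ := ham_eq_one_elim h1
        refine ⟨m, ?_, hm, hagree⟩
        rintro rfl
        apply hwB
        refine Finset.mem_filter.2 ⟨Finset.mem_univ _, ⟨d, hd, ?_⟩⟩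
        exact update_eq_of_agree_off hagree
    obtain ⟨m, hmi, hym, hyagree⟩ := hstep y c hc hle hyB
    obtain ⟨m', hm'i, hy'm', hy'agree⟩ := hstep y' c' hc' hle' hy'B
    have hagreeyy' : ∀ j, j ≠ i → y j = y' j := agree_off_of_update_eq hπeq
    by_cases hcc : c = c'
    · subst hcc
      apply hne
      funext j
      by_cases hj : j = i
      · rw [hj, hyagree i (Ne.symm hmi), hy'agree i (Ne.symm hm'i)]
      · exact hagreeyy' j hj
    · have h4 := d4 c hc c' hc' hcc
      have : hammingDist c c' ≤ 3 := by
        calc hammingDist c c' ≤ hammingDist c y + hammingDist y c' :=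
              hammingDist_triangle _ _ _
          _ ≤ hammingDist c y + (hammingDist y y' + hammingDist y' c') :=
              by have := hammingDist_triangle y y' c'; omega
          _ ≤ 1 + (1 + 1) := by
              have e1 : hammingDist c y ≤ 1 := by rw [hammingDist_comm]; exact hle
              have e2 : hammingDist y y' ≤ 1 := ham_le_one_of_agree hagreeyy'
              omega
      omega
  -- arithmetic: |A| = |Λf|
  have hcards : A.card = Λf.card := by
    have e3 : q ^ (q+2) = q ^ (q-1) * (q*q*q) := by
      rw [show q + 2 = (q - 1) + 3 by omega, pow_add]; ring
    have e1 : A.card + F.card * q = F.card * (1 + (q+2) * (q-1)) := by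
      rw [← hB, ← hN]; exact hA
    rw [← hΛf, himcard] at hΛ
    have e2 : (Λf.card + F.card) * q = F.card * (q*q*q) := by
      rw [hΛ, e3, hFcard]
    have hq1 : 1 ≤ q := by omega
    zify [hq1] at e1 e2
    have hqz : (q : ℤ) ≠ 0 := by positivity
    have e2' : (Λf.card : ℤ) + F.card = F.card * (q*q) :=
      mul_right_cancel₀ hqz (by linear_combination e2)
    zify
    linear_combination e1 - e2'
  -- image of A under π equals Λf
  have himageA : A.image π ⊆ Λf := by
    intro z hz
    obtain ⟨y, hy, rfl⟩ := Finset.mem_image.1 hz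
    refine Finset.mem_sdiff.2 ⟨?_, ?_⟩
    · exact Finset.mem_filter.2 ⟨Finset.mem_univ _, Function.update_self i 0 y⟩
    · intro hmem
      obtain ⟨c, hc, hπc⟩ := Finset.mem_image.1 hmem
      exact (Finset.mem_sdiff.1 hy).2
        (Finset.mem_filter.2 ⟨Finset.mem_univ _, ⟨c, hc, hπc.symm⟩⟩)
  have himeq : A.image π = Λf := by
    apply Finset.eq_of_subset_of_card_le himageA
    rw [Finset.card_image_of_injOn (fun y hy y' hy' h => hπinjA y hy y' hy' h), hcards]
  -- x's line label is in Λf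
  have hxΛf : π x ∈ Λf := by
    refine Finset.mem_sdiff.2 ⟨?_, ?_⟩
    · exact Finset.mem_filter.2 ⟨Finset.mem_univ _, Function.update_self i 0 x⟩
    · intro hmem
      obtain ⟨c, hc, hπc⟩ := Finset.mem_image.1 hmem
      have : hammingDist x c ≤ 1 := ham_le_one_of_agree (agree_off_of_update_eq hπc.symm)
      have := far c hc
      omega
  rw [← himeq] at hxΛf
  obtain ⟨y, hyA, hπyx⟩ := Finset.mem_image.1 hxΛf
  -- extract the codeword
  have hyN := (Finset.mem_sdiff.1 hyA).1
  obtain ⟨c, hc, hle⟩ := (Finset.mem_filter.1 hyN).2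
  have hagreeyx : ∀ j, j ≠ i → y j = x j := agree_off_of_update_eq hπyx
  rcases Nat.le_one_iff_eq_zero_or_eq_one.1 hle with h0 | h1
  · exfalso
    have hyc : y = c := eq_of_hammingDist_eq_zero h0
    have h2 := far c hc
    have hyx : hammingDist x c ≤ 1 := by
      apply ham_le_one_of_agree (i := i)
      intro j hj
      rw [← hyc]
      exact (hagreeyx j hj).symm
    omega
  · obtain ⟨m, hym, hyagree⟩ := ham_eq_one_elim h1
    have hmi : m ≠ i := by
      rintro rfl
      have hxc : ∀ j, j ≠ m → x j = c j := by
        intro j hj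
        rw [← hagreeyx j hj]
        exact hyagree j hj
      have : hammingDist x c ≤ 1 := ham_le_one_of_agree hxc
      have := far c hc
      omega
    have hyi : y i ≠ x i := by
      intro h
      have hyx : y = x := by
        funext j
        by_cases hj : j = i
        · rw [hj]; exact h
        · exact hagreeyx j hj
      have h2 := far c hc
      rw [← hyx] at h2
      omega
    have hci : c i ≠ x i := by
      have : c i = y i := (hyagree i (Ne.symm hmi)).symm
      rw [this]
      exact hyi
    refine ⟨c, hc, ?_, hci⟩
    have hfilter : (Finset.univ.filter fun j => x j ≠ c j) = {i, m} := by
      ext j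
      simp only [mem_ham_filter, Finset.mem_insert, Finset.mem_singleton]
      constructor
      · intro hj
        by_contra hcon
        push_neg at hcon
        obtain ⟨hji, hjm⟩ := hcon
        apply hj
        rw [← hagreeyx j hji]
        exact hyagree j hjm
      · intro hj
        rcases hj with hj | hj
        · rw [hj]
          exact fun h => hci h.symm
        · rw [hj]
          intro h
          apply hym
          rw [hagreeyx m hmi]
          exact h
    rw [ham_filter, hfilter,
      Finset.card_insert_of_notMem (Finset.notMem_singleton.2 (Ne.symm hmi)),
      Finset.card_singleton]

end KeyLemma

/-- Corollary 1 (Statement 13): if `q ≥ 3` is odd, then there is no MDS code with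
distance `4` in `H(q+2,q)`, i.e. no code with code distance `4` and cardinality
`q^(q−1)`. -/
theorem statement13 (q : ℕ) (hq : 3 ≤ q) (hodd : Odd q) :
    ¬ ∃ C : Set (Fin (q + 2) → ZMod q),
        C.Nonempty ∧ codeDist (hammingGraph (q + 2) q) C = 4 ∧ C.ncard = q ^ (q - 1) := by
  classical
  haveI : NeZero q := ⟨by omega⟩
  rintro ⟨C, hne, hdist, hcard⟩
  have hfin : C.Finite := Set.toFinite C
  set F : Finset (Fin (q+2) → ZMod q) := hfin.toFinset with hFdef
  have hmemF : ∀ c, c ∈ F ↔ c ∈ C := fun c => Set.Finite.mem_toFinset hfin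
  have hFcard : F.card = q ^ (q-1) := by
    rw [← hcard, Set.ncard_eq_toFinset_card C hfin]
  have d4 : ∀ c ∈ F, ∀ c' ∈ F, c ≠ c' → 4 ≤ hammingDist c c' := by
    intro c hc c' hc' hne'
    have hmem : (hammingGraph (q+2) q).dist c c' ∈
        {d : ℕ | ∃ x ∈ C, ∃ y ∈ C, x ≠ y ∧ (hammingGraph (q+2) q).dist x y = d} :=
      ⟨c, (hmemF c).1 hc, c', (hmemF c').1 hc', hne', rfl⟩
    have h1 : 4 ≤ (hammingGraph (q+2) q).dist c c' := by
      rw [← hdist]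
      exact Nat.sInf_le hmem
    calc 4 ≤ (hammingGraph (q+2) q).dist c c' := h1
      _ ≤ hammingDist c c' := dist_le_ham c c'
  -- a vertex at Hamming distance ≥ 2 from the code
  obtain ⟨c₀, hc₀⟩ := hne
  have hc₀F : c₀ ∈ F := (hmemF c₀).2 hc₀
  haveI : Fact (1 < q) := ⟨by omega⟩
  have hone : (1 : ZMod q) ≠ 0 := one_ne_zero
  have h01 : (0 : Fin (q+2)) ≠ 1 := by
    intro h
    simpa using congrArg Fin.val h
  set x : Fin (q+2) → ZMod q :=
    Function.update (Function.update c₀ 0 (c₀ 0 + 1)) 1 (c₀ 1 + 1) with hxdef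
  have hx0 : x 0 = c₀ 0 + 1 := by
    rw [hxdef, Function.update_of_ne h01, Function.update_self]
  have hx1 : x 1 = c₀ 1 + 1 := by
    rw [hxdef, Function.update_self]
  have hxother : ∀ j, j ≠ 0 → j ≠ 1 → x j = c₀ j := by
    intro j hj0 hj1
    rw [hxdef, Function.update_of_ne hj1, Function.update_of_ne hj0]
  have hselfne : ∀ a : ZMod q, a + 1 ≠ a := by
    intro a h
    exact hone (add_eq_left.1 h)
  have hxc₀ : hammingDist x c₀ = 2 := by
    have hfe : (Finset.univ.filter fun j => x j ≠ c₀ j) = {0, 1} := by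
      ext j
      rw [mem_ham_filter]
      constructor
      · intro hj
        by_contra hcon
        simp only [Finset.mem_insert, Finset.mem_singleton, not_or] at hcon
        exact hj (hxother j hcon.1 hcon.2)
      · intro hj
        rcases Finset.mem_insert.1 hj with hj' | hj'
        · rw [hj', hx0]; exact hselfne _
        · rw [Finset.mem_singleton.1 hj', hx1]; exact hselfne _
    rw [ham_filter, hfe,
      Finset.card_insert_of_notMem (Finset.notMem_singleton.2 h01),
      Finset.card_singleton]
  have far : ∀ c ∈ F, 2 ≤ hammingDist x c := by
    intro c hc
    by_cases hcc : c = c₀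
    · rw [hcc, hxc₀]
    · have h4 := d4 c₀ hc₀F c hc (Ne.symm hcc)
      have htri : hammingDist c₀ c ≤ hammingDist c₀ x + hammingDist x c :=
        hammingDist_triangle _ _ _
      have hc₀x : hammingDist c₀ x = 2 := by rw [hammingDist_comm]; exact hxc₀
      omega
  -- for each coordinate, a codeword at distance 2 differing there
  have key := fun i => key_lemma q hq F hFcard d4 x far i
  choose cc hccF hham2 hcci using key
  set supp : Fin (q+2) → Finset (Fin (q+2)) :=
    fun i => Finset.univ.filter fun j => x j ≠ cc i j with hsuppdef
  have hsuppcard : ∀ i, (supp i).card = 2 := by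
    intro i
    rw [hsuppdef, ← ham_filter]
    exact hham2 i
  have hmemsupp : ∀ i, i ∈ supp i := by
    intro i
    rw [hsuppdef]
    exact Finset.mem_filter.2 ⟨Finset.mem_univ _, fun h => hcci i h.symm⟩
  -- supports intersect only if the codewords coincide
  have hdisj : ∀ i i' j, j ∈ supp i → j ∈ supp i' → cc i = cc i' := by
    intro i i' j hj hj'
    by_contra hne'
    have h4 := d4 (cc i) (hccF i) (cc i') (hccF i') hne'
    have hsub : (Finset.univ.filter fun k => cc i k ≠ cc i' k) ⊆ supp i ∪ supp i' := by
      intro k hk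
      rw [mem_ham_filter] at hk
      rw [Finset.mem_union, hsuppdef]
      simp only [Finset.mem_filter, Finset.mem_univ, true_and]
      by_contra hcon
      simp only [not_or, not_not] at hcon
      apply hk
      rw [← hcon.1, hcon.2]
    have hinter : 0 < (supp i ∩ supp i').card :=
      Finset.card_pos.2 ⟨j, Finset.mem_inter.2 ⟨hj, hj'⟩⟩
    have hunion := Finset.card_union_add_card_inter (supp i) (supp i')
    have hle : hammingDist (cc i) (cc i') ≤ (supp i ∪ supp i').card := by
      rw [ham_filter]
      exact Finset.card_le_card hsub
    rw [hsuppcard i, hsuppcard i'] at hunion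
    omega
  -- the partner map
  have hother : ∀ i, ∃ j, (supp i).erase i = {j} := by
    intro i
    apply Finset.card_eq_one.1
    rw [Finset.card_erase_of_mem (hmemsupp i), hsuppcard i]
  choose σ hσ using hother
  have hσmem : ∀ i, σ i ∈ (supp i).erase i := fun i =>
    (hσ i) ▸ Finset.mem_singleton_self _
  have hσne : ∀ i, σ i ≠ i := fun i => (Finset.mem_erase.1 (hσmem i)).1
  have hσsupp : ∀ i, σ i ∈ supp i := fun i => (Finset.mem_erase.1 (hσmem i)).2
  have hinv : ∀ i, σ (σ i) = i := by
    intro i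
    have hcceq : cc (σ i) = cc i := hdisj (σ i) i (σ i) (hmemsupp (σ i)) (hσsupp i)
    have hsupp2 : supp (σ i) = supp i := by
      simp only [hsuppdef, hcceq]
    have h1 : (supp (σ i)).erase (σ i) = {σ (σ i)} := hσ (σ i)
    have hsuppeq : supp i = {i, σ i} := by
      conv_lhs => rw [← Finset.insert_erase (hmemsupp i), hσ i]
    rw [hsupp2, hsuppeq] at h1
    have h2 : ({i, σ i} : Finset (Fin (q+2))).erase (σ i) = {i} := by
      ext k
      constructor
      · intro hk
        obtain ⟨hk1, hk2⟩ := Finset.mem_erase.1 hk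
        rcases Finset.mem_insert.1 hk2 with h | h
        · exact Finset.mem_singleton.2 h
        · exact absurd (Finset.mem_singleton.1 h) hk1
      · intro hk
        rw [Finset.mem_singleton] at hk
        refine Finset.mem_erase.2 ⟨?_, ?_⟩
        · rw [hk]
          exact Ne.symm (hσne i)
        · rw [hk]
          exact Finset.mem_insert_self _ _
    rw [h2] at h1
    exact (Finset.singleton_inj.1 h1.symm)
  -- parity contradiction
  have heven : Even (q+2) := even_of_involution σ hinv hσne
  obtain ⟨k, hk⟩ := heven
  obtain ⟨l, hl⟩ := hodd
  omega
end
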